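/- arXiv:1907.00681 — 6 statements merged into one kernel-verified Lean document; each statement's English description precedes it below -/
import Mathlib

section
/- Generalized intermediate value theorem for càdlàg functions: let F : ℝ → ℝ be right-continuous with left limits at every point, let x₀ < x₁ and h ∈ ℝ satisfy (F(x₀) − h)·(F(x₁) − h) < 0. Then there exists x ∈ (x₀, x₁] such that h lies in the closed interval with endpoints F(x⁻) and F(x), where F(x⁻) denotes the left limit of F at x. -/
open Set Filter

lemma stmt_4_aux (F : ℝ → ℝ)
    (hright : ∀ x : ℝ, ContinuousWithinAt F (Set.Ici x) x)
    (hleft : ∀ x : ℝ, ∃ l : ℝ, Tendsto F (nhdsWithin x (Set.Iio x)) (nhds l))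
    (x₀ x₁ h : ℝ) (hx : x₀ < x₁)
    (h0 : F x₀ < h) (h1 : h < F x₁) :
    ∃ x ∈ Set.Ioc x₀ x₁, h ∈ Set.uIcc (Function.leftLim F x) (F x) := by
  set S : Set ℝ := {y | y ∈ Set.Icc x₀ x₁ ∧ F y < h} with hS
  have hx₀S : x₀ ∈ S := ⟨⟨le_refl _, hx.le⟩, h0⟩
  have hne : S.Nonempty := ⟨x₀, hx₀S⟩
  have hbdd : BddAbove S := ⟨x₁, fun y hy => hy.1.2⟩
  set x := sSup S with hxdef
  have hxle : x ≤ x₁ := csSup_le hne (fun y hy => hy.1.2)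
  have hx₀le : x₀ ≤ x := le_csSup hbdd hx₀S
  -- F x ≥ h
  have hFx : h ≤ F x := by
    by_contra hlt
    push_neg at hlt
    have hxlt : x < x₁ := by
      rcases lt_or_eq_of_le hxle with h' | h'
      · exact h'
      · exfalso; rw [h'] at hlt; exact absurd h1 (not_lt.2 hlt.le)
    -- right continuity: eventually F y < h on 𝓝[>] x
    have hev : ∀ᶠ y in nhdsWithin x (Set.Ioi x), F y < h := by
      have := (hright x).eventually (p := fun v => v < h) (Filter.Tendsto.eventually_lt_const hlt (by exact tendsto_id) |>.mono (fun v hv => hv))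
      · exact nhdsWithin_mono x Set.Ioi_subset_Ici_self this
    have hev2 : ∀ᶠ y in nhdsWithin x (Set.Ioi x), y < x₁ :=
      eventually_nhdsWithin_of_eventually_nhds (eventually_lt_nhds hxlt)
    have hev3 : ∀ᶠ y in nhdsWithin x (Set.Ioi x), y ∈ Set.Ioi x :=
      eventually_mem_nhdsWithin
    obtain ⟨y, hy1, hy2, hy3⟩ := (hev.and (hev2.and hev3)).exists
    have hyS : y ∈ S := ⟨⟨hx₀le.trans hy3.le, hy2.le⟩, hy1⟩
    exact absurd (le_csSup hbdd hyS) (not_le.2 hy3)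
  -- x > x₀
  have hx₀lt : x₀ < x := by
    have hev : ∀ᶠ y in nhdsWithin x₀ (Set.Ioi x₀), F y < h := by
      have := (hright x₀).eventually (p := fun v => v < h) (Filter.Tendsto.eventually_lt_const h0 (by exact tendsto_id) |>.mono (fun v hv => hv))
      exact nhdsWithin_mono x₀ Set.Ioi_subset_Ici_self this
    have hev2 : ∀ᶠ y in nhdsWithin x₀ (Set.Ioi x₀), y < x₁ :=
      eventually_nhdsWithin_of_eventually_nhds (eventually_lt_nhds hx)
    have hev3 : ∀ᶠ y in nhdsWithin x₀ (Set.Ioi x₀), y ∈ Set.Ioi x₀ :=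
      eventually_mem_nhdsWithin
    obtain ⟨y, hy1, hy2, hy3⟩ := (hev.and (hev2.and hev3)).exists
    have hyS : y ∈ S := ⟨⟨hy3.le, hy2.le⟩, hy1⟩
    exact lt_of_lt_of_le hy3 (le_csSup hbdd hyS)
  -- left limit
  obtain ⟨l, hl⟩ := hleft x
  have hne' : (nhdsWithin x (Set.Iio x)).NeBot := by
    exact nhdsLT_neBot x
  have hll : Function.leftLim F x = l := leftLim_eq_of_tendsto hl
  have hfreq : ∃ᶠ y in nhdsWithin x (Set.Iio x), F y < h := by
    rw [frequently_iff]
    intro s hs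
    rw [mem_nhdsLT_iff_exists_Ioo_subset] at hs
    obtain ⟨a, ha, hsub⟩ := hs
    obtain ⟨y, hyS, hay⟩ := exists_lt_of_lt_csSup hne ha
    have hyx : y ≤ x := le_csSup hbdd hyS
    have hyx' : y < x := lt_of_le_of_ne hyx (by rintro rfl; exact absurd hFx (not_le.2 hyS.2))
    exact ⟨y, hsub ⟨hay, hyx'⟩, hyS.2⟩
  have hlle : l ≤ h := by
    by_contra hc
    push_neg at hc
    have hev : ∀ᶠ y in nhdsWithin x (Set.Iio x), h < F y :=
      hl.eventually (Filter.Tendsto.eventually_const_lt hc tendsto_id)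
    obtain ⟨y, hy1, hy2⟩ := (hfreq.and_eventually hev).exists
    exact absurd hy2 (not_lt.2 hy1.le)
  refine ⟨x, ⟨hx₀lt, hxle⟩, ?_⟩
  rw [hll, Set.uIcc_of_le (hlle.trans hFx)]
  exact ⟨hlle, hFx⟩

/-- Generalized intermediate value theorem for càdlàg functions: if `F` is
right-continuous with left limits, `x₀ < x₁` and `(F x₀ − h)(F x₁ − h) < 0`,
then some `x ∈ (x₀, x₁]` satisfies `h ∈ [min (F x⁻) (F x), max (F x⁻) (F x)]`. -/
theorem stmt_4 (F : ℝ → ℝ)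
    (hright : ∀ x : ℝ, ContinuousWithinAt F (Set.Ici x) x)
    (hleft : ∀ x : ℝ, ∃ l : ℝ, Tendsto F (nhdsWithin x (Set.Iio x)) (nhds l))
    (x₀ x₁ h : ℝ) (hx : x₀ < x₁)
    (hsign : (F x₀ - h) * (F x₁ - h) < 0) :
    ∃ x ∈ Set.Ioc x₀ x₁, h ∈ Set.uIcc (Function.leftLim F x) (F x) := by
  rcases mul_neg_iff.1 hsign with ⟨hp, hn⟩ | ⟨hn, hp⟩
  · -- F x₀ > h, F x₁ < h : apply aux to -F, -h
    have h0 : (fun y => -F y) x₀ < -h := by simpa using sub_pos.1 hp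
    have h1 : -h < (fun y => -F y) x₁ := by simpa using sub_neg.1 hn
    obtain ⟨x, hx', hmem⟩ := stmt_4_aux (fun y => -F y)
      (fun y => (hright y).neg)
      (fun y => by obtain ⟨l, hl⟩ := hleft y; exact ⟨-l, hl.neg⟩)
      x₀ x₁ (-h) hx h0 h1
    refine ⟨x, hx', ?_⟩
    obtain ⟨l, hl⟩ := hleft x
    have hne' : (nhdsWithin x (Set.Iio x)).NeBot := nhdsLT_neBot x
    have hll : Function.leftLim F x = l := leftLim_eq_of_tendsto hl
    have hll' : Function.leftLim (fun y => -F y) x = -l :=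
      leftLim_eq_of_tendsto hl.neg
    rw [hll'] at hmem
    rw [hll]
    rwa [← Set.neg_uIcc, Set.mem_neg, neg_neg] at hmem
  · -- F x₀ < h < F x₁
    exact stmt_4_aux F hright hleft x₀ x₁ h hx (sub_neg.1 hn) (sub_pos.1 hp)
end

section
/- Let π be a transport plan on ℝ × ℝ with marginals μ and ν, concentrated on a set S such that no point is simultaneously a nontrivial departure and a nontrivial arrival (if (x,y) ∈ S, (x',y') ∈ S, |y−x| > 0 and |y'−x'| > 0 then y ≠ x'). Then π decomposes as π = π_Δ + π₀ where π_Δ is the image of μ ∧ ν under x ↦ (x,x), and π₀ gives zero mass to the diagonal; moreover the marginals of π₀, namely μ − (μ∧ν) and ν − (μ∧ν), are mutually singular. -/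
open MeasureTheory

/-- If a transport plan `π` between `μ` and `ν` is concentrated on a set `S`
whose arches do not connect, then `π = π_Δ + π₀` with
`π_Δ = (id × id)_#(μ ⊓ ν)`, `π₀` vanishing on the diagonal, the marginals of
`π₀` being `μ − μ⊓ν` and `ν − μ⊓ν`, and these marginals mutually singular. -/
theorem stmt_9
    (μ ν : Measure ℝ) [IsFiniteMeasure μ] [IsFiniteMeasure ν]
    (hmass : μ Set.univ = ν Set.univ)
    (π : Measure (ℝ × ℝ)) [IsFiniteMeasure π]
    (h1 : π.map Prod.fst = μ) (h2 : π.map Prod.snd = ν)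
    (S : Set (ℝ × ℝ)) (hS : MeasurableSet S) (hconc : π Sᶜ = 0)
    (hnoconnect : ∀ x y x' y' : ℝ, (x, y) ∈ S → (x', y') ∈ S →
      x ≠ y → x' ≠ y' → y ≠ x') :
    ∃ π₀ : Measure (ℝ × ℝ),
      π = Measure.map (fun x : ℝ => (x, x)) (μ ⊓ ν) + π₀ ∧
      π₀ {z : ℝ × ℝ | z.1 = z.2} = 0 ∧
      π₀.map Prod.fst = μ - μ ⊓ ν ∧
      π₀.map Prod.snd = ν - μ ⊓ ν ∧
      (μ - μ ⊓ ν) ⟂ₘ (ν - μ ⊓ ν) := by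
  classical
  set Δ : Set (ℝ × ℝ) := {z : ℝ × ℝ | z.1 = z.2} with hΔdef
  have hΔ : MeasurableSet Δ := measurableSet_eq_fun measurable_fst measurable_snd
  set πΔ : Measure (ℝ × ℝ) := π.restrict Δ with hπΔdef
  set π₀ : Measure (ℝ × ℝ) := π.restrict Δᶜ with hπ₀def
  have hsplit : πΔ + π₀ = π := Measure.restrict_add_restrict_compl hΔ
  set η : Measure ℝ := πΔ.map Prod.fst with hηdef
  set μ₀ : Measure ℝ := π₀.map Prod.fst with hμ₀def
  set ν₀ : Measure ℝ := π₀.map Prod.snd with hν₀def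
  -- πΔ is concentrated on Δ
  have hπΔΔc : πΔ Δᶜ = 0 := by
    rw [hπΔdef, Measure.restrict_apply hΔ.compl]
    simp
  have haeΔ : ∀ᵐ z ∂πΔ, z ∈ Δ := by
    rw [MeasureTheory.ae_iff]
    exact hπΔΔc
  -- snd marginal of πΔ equals fst marginal
  have hηs : πΔ.map Prod.snd = η := by
    rw [hηdef]
    apply Measure.map_congr
    filter_upwards [haeΔ] with z hz
    exact hz.symm
  -- marginal decompositions
  have hμ : μ = η + μ₀ := by
    rw [← h1, ← hsplit, Measure.map_add _ _ measurable_fst]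
  have hν : ν = η + ν₀ := by
    rw [← h2, ← hsplit, Measure.map_add _ _ measurable_snd, hηs]
  -- π₀ is concentrated on G = S ∩ Δᶜ
  set G : Set (ℝ × ℝ) := S ∩ Δᶜ with hGdef
  have hG : MeasurableSet G := hS.inter hΔ.compl
  have hπ₀G : π₀ Gᶜ = 0 := by
    rw [hπ₀def, Measure.restrict_apply hG.compl]
    have hsub : Gᶜ ∩ Δᶜ ⊆ Sᶜ := by
      intro z hz
      rcases hz with ⟨hz1, hz2⟩
      rw [hGdef, Set.compl_inter] at hz1
      rcases hz1 with h | h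
      · exact h
      · exact absurd (by simpa using h) hz2
    exact measure_mono_null hsub hconc
  -- the departure and arrival sets of nontrivial arches
  set A : Set ℝ := Prod.fst '' G with hAdef
  set B : Set ℝ := Prod.snd '' G with hBdef
  have hdisj : Disjoint A B := by
    rw [Set.disjoint_left]
    rintro a ⟨⟨x, y⟩, ⟨hxyS, hxyΔ⟩, rfl⟩ ⟨⟨x', y'⟩, ⟨hS', hΔ'⟩, hy'⟩
    simp only at hy'
    have hne : x ≠ y := by simpa [hΔdef] using hxyΔ
    have hne' : x' ≠ y' := by simpa [hΔdef] using hΔ'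
    exact hnoconnect x' y' x y hS' hxyS hne' hne (by rw [hy'])
  -- Lusin separation: a Borel set T with B ⊆ T and A ∩ T = ∅
  have hAan : MeasureTheory.AnalyticSet A :=
    hG.analyticSet.image_of_continuous continuous_fst
  have hBan : MeasureTheory.AnalyticSet B :=
    hG.analyticSet.image_of_continuous continuous_snd
  obtain ⟨T, hBT, hAT, hTm⟩ := hBan.measurablySeparable hAan hdisj.symm
  -- μ₀ T = 0 and ν₀ Tᶜ = 0
  have hμ₀T : μ₀ T = 0 := by
    rw [hμ₀def, Measure.map_apply measurable_fst hTm]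
    refine measure_mono_null ?_ hπ₀G
    intro z hz hzG
    exact Set.disjoint_left.1 hAT (Set.mem_image_of_mem Prod.fst hzG) hz
  have hν₀T : ν₀ Tᶜ = 0 := by
    rw [hν₀def, Measure.map_apply measurable_snd hTm.compl]
    refine measure_mono_null ?_ hπ₀G
    intro z hz hzG
    exact hz (hBT (Set.mem_image_of_mem Prod.snd hzG))
  have hsing : μ₀ ⟂ₘ ν₀ := ⟨T, hTm, hμ₀T, hν₀T⟩
  -- η is finite
  have hηfin : IsFiniteMeasure η := by
    constructor
    rw [hηdef, Measure.map_apply measurable_fst MeasurableSet.univ]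
    exact lt_of_le_of_lt (measure_mono (Set.subset_univ _))
      (lt_of_le_of_lt (le_of_eq (by rw [hπΔdef, Measure.restrict_apply_univ]))
        (measure_lt_top π Δ))
  -- μ ⊓ ν = η
  have hinf : μ ⊓ ν = η := by
    apply le_antisymm
    · rw [Measure.le_iff]
      intro E hE
      have hsplitE : (μ ⊓ ν) E = (μ ⊓ ν) (E ∩ T) + (μ ⊓ ν) (E \ T) :=
        (measure_inter_add_diff E hTm).symm
      have h1' : (μ ⊓ ν) (E ∩ T) ≤ η (E ∩ T) := by
        calc (μ ⊓ ν) (E ∩ T) ≤ μ (E ∩ T) :=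
              Measure.le_iff.1 inf_le_left _ (hE.inter hTm)
          _ = η (E ∩ T) + μ₀ (E ∩ T) := by rw [hμ]; rfl
          _ = η (E ∩ T) := by
              rw [measure_mono_null (Set.inter_subset_right) hμ₀T, add_zero]
      have h2' : (μ ⊓ ν) (E \ T) ≤ η (E \ T) := by
        calc (μ ⊓ ν) (E \ T) ≤ ν (E \ T) :=
              Measure.le_iff.1 inf_le_right _ (hE.diff hTm)
          _ = η (E \ T) + ν₀ (E \ T) := by rw [hν]; rfl
          _ = η (E \ T) := by
              rw [measure_mono_null (fun z hz => hz.2) hν₀T, add_zero]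
      calc (μ ⊓ ν) E = (μ ⊓ ν) (E ∩ T) + (μ ⊓ ν) (E \ T) := hsplitE
        _ ≤ η (E ∩ T) + η (E \ T) := add_le_add h1' h2'
        _ = η E := measure_inter_add_diff E hTm
    · exact le_inf (hμ ▸ Measure.le_add_right le_rfl)
        (hν ▸ Measure.le_add_right le_rfl)
  -- subtraction of marginals
  have hμsub : μ - μ ⊓ ν = μ₀ := by
    rw [hinf, hμ, add_comm]
    exact Measure.add_sub_cancel
  have hνsub : ν - μ ⊓ ν = ν₀ := by
    rw [hinf, hν, add_comm]
    exact Measure.add_sub_cancel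
  refine ⟨π₀, ?_, ?_, hμsub.symm, hνsub.symm, hμsub ▸ hνsub ▸ hsing⟩
  · -- π = map diag (μ ⊓ ν) + π₀
    rw [hinf]
    have : Measure.map (fun x : ℝ => (x, x)) η = πΔ := by
      rw [hηdef, Measure.map_map
        (show Measurable fun x : ℝ => (x, x) from measurable_id.prodMk measurable_id)
        measurable_fst]
      have : πΔ.map (fun z : ℝ × ℝ => (z.1, z.1)) = πΔ.map id := by
        apply Measure.map_congr
        filter_upwards [haeΔ] with z hz
        have : z.1 = z.2 := hz
        simp [Prod.ext_iff, this]
      rw [show ((fun x : ℝ => (x, x)) ∘ Prod.fst) = (fun z : ℝ × ℝ => (z.1, z.1)) from rfl,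
        this, Measure.map_id]
    rw [this, hsplit]
  · -- π₀ vanishes on the diagonal
    rw [hπ₀def, Measure.restrict_apply hΔ]
    simp
end

section
/- Continuity of the power-cost functional: fix p ∈ (0,1] and probability measures μ, ν on ℝ with finite p-th moment. Then the map T_p : π ↦ ∫∫ |y−x|^p dπ(x,y), defined on the set of transport plans between μ and ν equipped with the topology of weak convergence, is continuous. -/
open MeasureTheory Filter Topology

private lemma real_rpow_add_le {p : ℝ} (hp0 : 0 ≤ p) (hp1 : p ≤ 1) {a b : ℝ}
    (ha : 0 ≤ a) (hb : 0 ≤ b) : (a + b) ^ p ≤ a ^ p + b ^ p := by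
  have h := NNReal.rpow_add_le_add_rpow a.toNNReal b.toNNReal hp0 hp1
  have := NNReal.coe_le_coe.2 h
  push_cast at this
  rwa [Real.coe_toNNReal _ ha, Real.coe_toNNReal _ hb] at this

private lemma abs_rpow_sub_le {p : ℝ} (hp0 : 0 ≤ p) (hp1 : p ≤ 1) (x y : ℝ) :
    |y - x| ^ p ≤ |x| ^ p + |y| ^ p := by
  have h1 : |y - x| ^ p ≤ (|x| + |y|) ^ p := by
    apply Real.rpow_le_rpow (abs_nonneg _) _ hp0
    calc |y - x| ≤ |y| + |x| := abs_sub _ _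
    _ = |x| + |y| := add_comm _ _
  exact h1.trans (real_rpow_add_le hp0 hp1 (abs_nonneg x) (abs_nonneg y))

private lemma tendsto_tail {α : Type*} [MeasurableSpace α] {m : Measure α}
    {g : α → ℝ} (hg : Integrable g m) (hg0 : ∀ x, 0 ≤ g x)
    (hgm : ∀ c : ℝ, AEStronglyMeasurable (fun x => max (g x - c) 0) m) :
    Tendsto (fun n : ℕ => ∫ x, max (g x - n / 2) 0 ∂m) atTop (𝓝 0) := by
  have h := tendsto_integral_of_dominated_convergence (μ := m)
    (F := fun (n : ℕ) x => max (g x - (n : ℝ) / 2) 0) (f := fun _ => (0 : ℝ)) g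
    (fun n => hgm _) hg ?_ ?_
  · simpa using h
  · intro n
    filter_upwards with x
    rw [Real.norm_eq_abs, abs_of_nonneg (le_max_right _ _)]
    have hn : (0 : ℝ) ≤ (n : ℕ) := Nat.cast_nonneg n
    exact max_le (by linarith [hg0 x]) (hg0 x)
  · filter_upwards with x
    apply tendsto_atTop_of_eventually_const (i₀ := ⌈2 * g x⌉₊)
    intro n hn
    have h2 : 2 * g x ≤ (n : ℝ) := le_trans (Nat.le_ceil _) (by exact_mod_cast hn)
    have : g x - (n : ℝ) / 2 ≤ 0 := by linarith
    simp [max_eq_right this]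

/-- Continuity of the power-cost functional `T_p` on the set of transport
plans between `μ` and `ν` (weak topology), for `p ∈ (0,1]` and marginals with
finite `p`-th moment. -/
theorem stmt_11 (p : ℝ) (hp0 : 0 < p) (hp1 : p ≤ 1)
    (μ ν : ProbabilityMeasure ℝ)
    (hμ : Integrable (fun x : ℝ => |x| ^ p) (μ : Measure ℝ))
    (hν : Integrable (fun x : ℝ => |x| ^ p) (ν : Measure ℝ)) :
    ContinuousOn
      (fun π : ProbabilityMeasure (ℝ × ℝ) =>
        ∫ z : ℝ × ℝ, |z.2 - z.1| ^ p ∂(π : Measure (ℝ × ℝ)))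
      {π : ProbabilityMeasure (ℝ × ℝ) |
        (π : Measure (ℝ × ℝ)).map Prod.fst = (μ : Measure ℝ) ∧
        (π : Measure (ℝ × ℝ)).map Prod.snd = (ν : Measure ℝ)} := by
  have hp0' : (0 : ℝ) ≤ p := hp0.le
  set f : ℝ × ℝ → ℝ := fun z => |z.2 - z.1| ^ p with hfdef
  have hfc : Continuous f :=
    (Real.continuous_rpow_const hp0').comp ((continuous_snd.sub continuous_fst).abs)
  have hf0 : ∀ z, 0 ≤ f z := fun z => Real.rpow_nonneg (abs_nonneg _) p
  have hac : Continuous (fun x : ℝ => |x| ^ p) :=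
    (Real.continuous_rpow_const hp0').comp continuous_abs
  -- tail function and its convergence
  set φ : ℕ → ℝ → ℝ := fun n t => max (|t| ^ p - (n : ℝ) / 2) 0 with hφdef
  have hφc : ∀ n, Continuous (φ n) := fun n => (hac.sub continuous_const).max continuous_const
  set tail : ℕ → ℝ := fun n => (∫ x, φ n x ∂(μ : Measure ℝ)) + ∫ x, φ n x ∂(ν : Measure ℝ)
    with htaildef
  have habs0 : ∀ x : ℝ, 0 ≤ |x| ^ p := fun x => Real.rpow_nonneg (abs_nonneg _) p
  have htail : Tendsto tail atTop (𝓝 0) := by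
    have h1 := tendsto_tail hμ habs0 (fun c => ((hac.sub continuous_const).max
      continuous_const).aestronglyMeasurable)
    have h2 := tendsto_tail hν habs0 (fun c => ((hac.sub continuous_const).max
      continuous_const).aestronglyMeasurable)
    simpa using h1.add h2
  -- integrability of φ n
  have hφint : ∀ (m : Measure ℝ), Integrable (fun x : ℝ => |x| ^ p) m →
      ∀ n, Integrable (φ n) m := by
    intro m hm n
    refine hm.mono (hφc n).aestronglyMeasurable ?_
    filter_upwards with x
    rw [Real.norm_eq_abs, abs_of_nonneg (le_max_right _ _), Real.norm_eq_abs,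
      abs_of_nonneg (habs0 x)]
    have hn : (0 : ℝ) ≤ (n : ℕ) := Nat.cast_nonneg n
    exact max_le (by linarith) (habs0 x)
  intro π₀ hπ₀
  rw [ContinuousWithinAt, Metric.tendsto_nhds]
  intro ε hε
  have hε3 : 0 < ε / 3 := by positivity
  obtain ⟨N, hN⟩ : ∃ N : ℕ, tail N < ε / 3 := (htail.eventually_lt_const hε3).exists
  -- the truncated cost as a bounded continuous function
  set G : BoundedContinuousFunction (ℝ × ℝ) ℝ :=
    BoundedContinuousFunction.ofNormedAddCommGroup (fun z => min (f z) (N : ℝ))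
      (hfc.min continuous_const) (N : ℝ)
      (fun z => by
        rw [Real.norm_eq_abs, abs_of_nonneg (le_min (hf0 z) (Nat.cast_nonneg N))]
        exact min_le_right _ _) with hGdef
  have hGapp : ∀ z, G z = min (f z) (N : ℝ) := fun z => rfl
  -- uniform truncation error bound over the set of couplings
  have bound : ∀ π : ProbabilityMeasure (ℝ × ℝ),
      (π : Measure (ℝ × ℝ)).map Prod.fst = (μ : Measure ℝ) →
      (π : Measure (ℝ × ℝ)).map Prod.snd = (ν : Measure ℝ) →
      0 ≤ (∫ z, f z ∂(π : Measure (ℝ × ℝ))) - ∫ z, G z ∂(π : Measure (ℝ × ℝ)) ∧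
      (∫ z, f z ∂(π : Measure (ℝ × ℝ))) - ∫ z, G z ∂(π : Measure (ℝ × ℝ)) ≤ tail N := by
    intro π hπ1 hπ2
    -- integrability of the marginal costs
    have h1 : Integrable (fun z : ℝ × ℝ => |z.1| ^ p) (π : Measure (ℝ × ℝ)) := by
      have hμ' := hμ; rw [← hπ1] at hμ'
      exact (integrable_map_measure hac.aestronglyMeasurable
        measurable_fst.aemeasurable).1 hμ'
    have h2 : Integrable (fun z : ℝ × ℝ => |z.2| ^ p) (π : Measure (ℝ × ℝ)) := by
      have hν' := hν; rw [← hπ2] at hν'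
      exact (integrable_map_measure hac.aestronglyMeasurable
        measurable_snd.aemeasurable).1 hν'
    have hfi : Integrable f (π : Measure (ℝ × ℝ)) := by
      refine (h1.add h2).mono hfc.aestronglyMeasurable ?_
      filter_upwards with z
      simp only [Pi.add_apply, Real.norm_eq_abs]
      rw [abs_of_nonneg (hf0 z), abs_of_nonneg (add_nonneg (habs0 z.1) (habs0 z.2))]
      exact abs_rpow_sub_le hp0' hp1 z.1 z.2
    have hGi : Integrable (fun z => G z) (π : Measure (ℝ × ℝ)) := G.integrable _
    have hφ1 : Integrable (fun z : ℝ × ℝ => φ N z.1) (π : Measure (ℝ × ℝ)) := by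
      have h := hφint (μ : Measure ℝ) hμ N
      rw [← hπ1] at h
      exact (integrable_map_measure (hφc N).aestronglyMeasurable
        measurable_fst.aemeasurable).1 h
    have hφ2 : Integrable (fun z : ℝ × ℝ => φ N z.2) (π : Measure (ℝ × ℝ)) := by
      have h := hφint (ν : Measure ℝ) hν N
      rw [← hπ2] at h
      exact (integrable_map_measure (hφc N).aestronglyMeasurable
        measurable_snd.aemeasurable).1 h
    rw [← integral_sub hfi hGi]
    constructor
    · exact integral_nonneg fun z => by
        simp only [hGapp]; exact sub_nonneg.2 (min_le_left _ _)
    · have hpt : ∀ z : ℝ × ℝ, f z - G z ≤ φ N z.1 + φ N z.2 := by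
        intro z
        have hsub := abs_rpow_sub_le hp0' hp1 z.1 z.2
        have hmax : f z - G z = max (f z - (N : ℝ)) 0 := by
          rw [hGapp]
          rcases le_total (f z) (N : ℝ) with h | h
          · rw [min_eq_left h, max_eq_right (sub_nonpos.2 h), sub_self]
          · rw [min_eq_right h, max_eq_left (sub_nonneg.2 h)]
        rw [hmax]
        apply max_le
        · have : f z - (N : ℝ) ≤ (|z.1| ^ p - (N : ℝ) / 2) + (|z.2| ^ p - (N : ℝ) / 2) := by
            simp only [hfdef] at hsub ⊢; linarith
          exact this.trans (add_le_add (le_max_left _ _) (le_max_left _ _))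
        · exact add_nonneg (le_max_right _ _) (le_max_right _ _)
      calc ∫ z, (f z - G z) ∂(π : Measure (ℝ × ℝ))
          ≤ ∫ z, (φ N z.1 + φ N z.2) ∂(π : Measure (ℝ × ℝ)) :=
            integral_mono (hfi.sub hGi) (hφ1.add hφ2) hpt
        _ = (∫ z : ℝ × ℝ, φ N z.1 ∂(π : Measure (ℝ × ℝ)))
              + ∫ z : ℝ × ℝ, φ N z.2 ∂(π : Measure (ℝ × ℝ)) := integral_add hφ1 hφ2
        _ = tail N := by
            rw [htaildef]
            congr 1
            · rw [← hπ1, integral_map measurable_fst.aemeasurable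
                (hφc N).aestronglyMeasurable]
            · rw [← hπ2, integral_map measurable_snd.aemeasurable
                (hφc N).aestronglyMeasurable]
  -- weak convergence of the truncated integrals
  have hGt : Tendsto (fun π : ProbabilityMeasure (ℝ × ℝ) =>
      ∫ z, G z ∂(π : Measure (ℝ × ℝ)))
      (𝓝[{π : ProbabilityMeasure (ℝ × ℝ) |
        (π : Measure (ℝ × ℝ)).map Prod.fst = (μ : Measure ℝ) ∧
        (π : Measure (ℝ × ℝ)).map Prod.snd = (ν : Measure ℝ)}] π₀)
      (𝓝 (∫ z, G z ∂(π₀ : Measure (ℝ × ℝ)))) :=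
    ((MeasureTheory.ProbabilityMeasure.continuous_integral_boundedContinuousFunction
      G).tendsto π₀).mono_left nhdsWithin_le_nhds
  filter_upwards [self_mem_nhdsWithin, (Metric.tendsto_nhds.1 hGt) (ε / 3) hε3]
    with π hπS hGπ
  obtain ⟨hπ1, hπ2⟩ := hπS
  obtain ⟨hb0, hb1⟩ := bound π hπ1 hπ2
  obtain ⟨hc0, hc1⟩ := bound π₀ hπ₀.1 hπ₀.2
  rw [Real.dist_eq] at hGπ ⊢
  have habs := abs_lt.1 hGπ
  show |(∫ z, f z ∂(π : Measure (ℝ × ℝ))) - ∫ z, f z ∂(π₀ : Measure (ℝ × ℝ))| < ε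
  rw [abs_sub_lt_iff]
  obtain ⟨ha1, ha2⟩ := habs
  set Aπ := ∫ z, f z ∂(π : Measure (ℝ × ℝ)) with hA1
  set Aπ₀ := ∫ z, f z ∂(π₀ : Measure (ℝ × ℝ)) with hA2
  set Bπ := ∫ z, G z ∂(π : Measure (ℝ × ℝ)) with hB1
  set Bπ₀ := ∫ z, G z ∂(π₀ : Measure (ℝ × ℝ)) with hB2
  clear_value Aπ Aπ₀ Bπ Bπ₀
  have hN' : tail N < ε / 3 := hN
  clear_value tail
  have t1 : Aπ - Aπ₀ < ε := by linarith
  have t2 : Aπ₀ - Aπ < ε := by linarith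
  exact ⟨t1, t2⟩
end

section
/- Joint continuity in (p, π): for probability measures μ, ν on ℝ with finite first moment, the map (p, π) ↦ ∫∫ |y−x|^p dπ(x,y) is continuous on (0,1] × Marg(μ,ν), where Marg(μ,ν) carries the weak topology. -/
open MeasureTheory Filter Topology

/-- pointwise: `t^p ≤ 1 + t` for `t ≥ 0`, `0 < p ≤ 1`. -/
lemma aux_rpow_le (t p : ℝ) (ht : 0 ≤ t) (hp : 0 ≤ p) (hp1 : p ≤ 1) : t ^ p ≤ 1 + t := by
  rcases le_total t 1 with h | h
  · have := Real.rpow_le_one ht h hp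
    linarith
  · have h2 : t ^ p ≤ t ^ (1:ℝ) := Real.rpow_le_rpow_of_exponent_le h hp1
    rw [Real.rpow_one] at h2
    linarith

lemma aux_if_nonneg (n a : ℝ) (hn : 1 ≤ n) : (0:ℝ) ≤ (if n/2 < a then 2*a else 0) := by
  split_ifs with h
  · linarith
  · exact le_refl 0

/-- pointwise tail bound. -/
lemma aux_pt (p n a b t : ℝ) (hp : 0 < p) (hp1 : p ≤ 1) (hn : 1 ≤ n)
    (ht : 0 ≤ t) (htab : t ≤ a + b) :
    t ^ p - (min t n) ^ p ≤ (if n/2 < a then 2*a else 0) + (if n/2 < b then 2*b else 0) := by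
  have hA := aux_if_nonneg n a hn
  have hB := aux_if_nonneg n b hn
  rcases le_or_gt t n with h | h
  · rw [min_eq_left h]
    simp only [sub_self]
    linarith
  · rw [min_eq_right h.le]
    have h1t : 1 ≤ t := le_trans hn h.le
    have htp : t ^ p ≤ t := by
      have := Real.rpow_le_rpow_of_exponent_le h1t hp1
      rwa [Real.rpow_one] at this
    have hnp : 0 ≤ n ^ p := Real.rpow_nonneg (by linarith) p
    have hle : t ≤ (if n/2 < a then 2*a else 0) + (if n/2 < b then 2*b else 0) := by
      rcases le_total a b with hab | hab
      · have hb : n/2 < b := by linarith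
        rw [if_pos hb]
        have : t ≤ 2*b := by linarith
        linarith
      · have ha : n/2 < a := by linarith
        rw [if_pos ha]
        have : t ≤ 2*a := by linarith
        linarith
    linarith

lemma aux_integrable_comp_fst {π : Measure (ℝ × ℝ)} {μ : Measure ℝ}
    (h : π.map Prod.fst = μ) {f : ℝ → ℝ} (hfm : Measurable f) (hf : Integrable f μ) :
    Integrable (fun z : ℝ × ℝ => f z.1) π := by
  have h' : Integrable f (π.map Prod.fst) := h ▸ hf
  exact (integrable_map_measure hfm.aestronglyMeasurable measurable_fst.aemeasurable).mp h'

lemma aux_integrable_comp_snd {π : Measure (ℝ × ℝ)} {ν : Measure ℝ}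
    (h : π.map Prod.snd = ν) {f : ℝ → ℝ} (hfm : Measurable f) (hf : Integrable f ν) :
    Integrable (fun z : ℝ × ℝ => f z.2) π := by
  have h' : Integrable f (π.map Prod.snd) := h ▸ hf
  exact (integrable_map_measure hfm.aestronglyMeasurable measurable_snd.aemeasurable).mp h'

lemma aux_cut_measurable (n : ℝ) : Measurable (fun x : ℝ => if n/2 < |x| then 2*|x| else 0) := by
  exact Measurable.ite (measurableSet_lt measurable_const measurable_id.abs)
    (measurable_id.abs.const_mul 2) measurable_const

/-- The tail integrals tend to zero. -/
lemma aux_tail_tendsto {μ : Measure ℝ} [IsProbabilityMeasure μ]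
    (hμ : Integrable (fun x : ℝ => |x|) μ) :
    Tendsto (fun m : ℕ => ∫ x, (if (m:ℝ)/2 < |x| then 2*|x| else 0) ∂μ) atTop (𝓝 0) := by
  have key : Tendsto (fun m : ℕ => ∫ x, (if (m:ℝ)/2 < |x| then 2*|x| else 0) ∂μ) atTop
      (𝓝 (∫ _x : ℝ, (0:ℝ) ∂μ)) := by
    apply tendsto_integral_of_dominated_convergence (fun x => 2*|x|)
    · exact fun m => (aux_cut_measurable (m:ℝ)).aestronglyMeasurable
    · exact hμ.const_mul 2
    · intro m
      filter_upwards with x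
      rw [Real.norm_eq_abs]
      split_ifs with h
      · rw [abs_of_nonneg (by positivity)]
      · simp [abs_nonneg]
    · filter_upwards with x
      have hev : ∀ᶠ m : ℕ in atTop, (if (m:ℝ)/2 < |x| then 2*|x| else 0) = 0 := by
        filter_upwards [eventually_ge_atTop ⌈2*|x|⌉₊] with m hm
        rw [if_neg]
        push_neg
        have : (2*|x| : ℝ) ≤ (m:ℝ) := le_trans (Nat.le_ceil _) (by exact_mod_cast hm)
        linarith
      exact Tendsto.congr' (hev.mono fun m h => h.symm) tendsto_const_nhds
  simpa using key

lemma aux_cut_integrable {μ : Measure ℝ} (hμ : Integrable (fun x : ℝ => |x|) μ) (n : ℝ) :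
    Integrable (fun x : ℝ => if n/2 < |x| then 2*|x| else 0) μ := by
  apply (hμ.const_mul 2).mono' (aux_cut_measurable n).aestronglyMeasurable
  filter_upwards with x
  rw [Real.norm_eq_abs]
  split_ifs with h
  · rw [abs_of_nonneg (by positivity)]
  · simpa using mul_nonneg (by norm_num : (0:ℝ) ≤ 2) (abs_nonneg x)

lemma aux_int_bdd {π : Measure (ℝ × ℝ)} [IsFiniteMeasure π] {f : ℝ × ℝ → ℝ}
    (hc : Continuous f) {C : ℝ} (hC : ∀ z, ‖f z‖ ≤ C) : Integrable f π :=
  (integrable_const C).mono' hc.aestronglyMeasurable (Eventually.of_forall hC)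

/-- Joint continuity of `(p, π) ↦ T_p(π)` on `(0,1] × Marg(μ,ν)`, for
marginals with finite first moment. -/
theorem stmt_14 (μ ν : ProbabilityMeasure ℝ)
    (hμ : Integrable (fun x : ℝ => |x|) (μ : Measure ℝ))
    (hν : Integrable (fun x : ℝ => |x|) (ν : Measure ℝ)) :
    ContinuousOn
      (fun q : ℝ × ProbabilityMeasure (ℝ × ℝ) =>
        ∫ z : ℝ × ℝ, |z.2 - z.1| ^ q.1 ∂(q.2 : Measure (ℝ × ℝ)))
      (Set.Ioc (0:ℝ) 1 ×ˢ
        {π : ProbabilityMeasure (ℝ × ℝ) |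
          (π : Measure (ℝ × ℝ)).map Prod.fst = (μ : Measure ℝ) ∧
          (π : Measure (ℝ × ℝ)).map Prod.snd = (ν : Measure ℝ)}) := by
  set S : Set (ℝ × ProbabilityMeasure (ℝ × ℝ)) :=
    Set.Ioc (0:ℝ) 1 ×ˢ
      {π : ProbabilityMeasure (ℝ × ℝ) |
        (π : Measure (ℝ × ℝ)).map Prod.fst = (μ : Measure ℝ) ∧
        (π : Measure (ℝ × ℝ)).map Prod.snd = (ν : Measure ℝ)} with hS
  set Fn : ℕ → ℝ × ProbabilityMeasure (ℝ × ℝ) → ℝ :=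
    fun m q => ∫ z : ℝ × ℝ, (min |z.2 - z.1| (m:ℝ)) ^ q.1 ∂(q.2 : Measure (ℝ × ℝ)) with hFn
  -- continuity of the integrands
  have hcont_d : Continuous (fun z : ℝ × ℝ => |z.2 - z.1|) :=
    (continuous_snd.sub continuous_fst).abs
  -- uniform approximation
  have hunif : TendstoUniformlyOn Fn
      (fun q : ℝ × ProbabilityMeasure (ℝ × ℝ) =>
        ∫ z : ℝ × ℝ, |z.2 - z.1| ^ q.1 ∂(q.2 : Measure (ℝ × ℝ))) atTop S := by
    rw [Metric.tendstoUniformlyOn_iff]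
    intro ε hε
    have htail : Tendsto (fun m : ℕ =>
        (∫ x, (if (m:ℝ)/2 < |x| then 2*|x| else 0) ∂(μ : Measure ℝ)) +
        (∫ x, (if (m:ℝ)/2 < |x| then 2*|x| else 0) ∂(ν : Measure ℝ))) atTop (𝓝 0) := by
      have := (aux_tail_tendsto hμ).add (aux_tail_tendsto hν)
      simpa using this
    have hev : ∀ᶠ m : ℕ in atTop,
        (∫ x, (if (m:ℝ)/2 < |x| then 2*|x| else 0) ∂(μ : Measure ℝ)) +
        (∫ x, (if (m:ℝ)/2 < |x| then 2*|x| else 0) ∂(ν : Measure ℝ)) < ε := by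
      have := htail.eventually (eventually_lt_nhds hε)
      simpa using this
    filter_upwards [hev, eventually_ge_atTop 1] with m hm hm1
    intro q hq
    obtain ⟨p, π⟩ := q
    obtain ⟨hp, hπ1, hπ2⟩ := hq
    have hn1 : (1:ℝ) ≤ (m:ℝ) := by exact_mod_cast hm1
    -- integrabilities
    have habs1 : Integrable (fun z : ℝ × ℝ => |z.1|) (π : Measure (ℝ × ℝ)) :=
      aux_integrable_comp_fst hπ1 measurable_id.abs hμ
    have habs2 : Integrable (fun z : ℝ × ℝ => |z.2|) (π : Measure (ℝ × ℝ)) :=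
      aux_integrable_comp_snd hπ2 measurable_id.abs hν
    have hcont1 : Continuous (fun z : ℝ × ℝ => |z.2 - z.1| ^ p) :=
      hcont_d.rpow_const (fun z => Or.inr hp.1.le)
    have hcont2 : Continuous (fun z : ℝ × ℝ => (min |z.2 - z.1| (m:ℝ)) ^ p) :=
      (hcont_d.min continuous_const).rpow_const (fun z => Or.inr hp.1.le)
    have hint1 : Integrable (fun z : ℝ × ℝ => |z.2 - z.1| ^ p) (π : Measure (ℝ × ℝ)) := by
      apply Integrable.mono' (((integrable_const (1:ℝ)).add habs1).add habs2)
        hcont1.aestronglyMeasurable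
      filter_upwards with z
      rw [Real.norm_eq_abs, abs_of_nonneg (Real.rpow_nonneg (abs_nonneg _) _)]
      have := aux_rpow_le |z.2 - z.1| p (abs_nonneg _) hp.1.le hp.2
      have habs : |z.2 - z.1| ≤ |z.1| + |z.2| := by
        calc |z.2 - z.1| ≤ |z.2| + |z.1| := abs_sub _ _
        _ = |z.1| + |z.2| := by ring
      simp only [Pi.add_apply]
      linarith
    have hint2 : Integrable (fun z : ℝ × ℝ => (min |z.2 - z.1| (m:ℝ)) ^ p)
        (π : Measure (ℝ × ℝ)) := by
      apply aux_int_bdd hcont2 (C := (m:ℝ))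
      intro z
      rw [Real.norm_eq_abs, abs_of_nonneg (Real.rpow_nonneg (le_min (abs_nonneg _) (by linarith)) _)]
      calc (min |z.2 - z.1| (m:ℝ)) ^ p ≤ (m:ℝ) ^ p :=
            Real.rpow_le_rpow (le_min (abs_nonneg _) (by linarith)) (min_le_right _ _) hp.1.le
        _ ≤ (m:ℝ) ^ (1:ℝ) := Real.rpow_le_rpow_of_exponent_le hn1 hp.2
        _ = (m:ℝ) := Real.rpow_one _
    have hg1 : Integrable (fun x : ℝ => if (m:ℝ)/2 < |x| then 2*|x| else 0) (μ : Measure ℝ) :=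
      aux_cut_integrable hμ _
    have hg2 : Integrable (fun x : ℝ => if (m:ℝ)/2 < |x| then 2*|x| else 0) (ν : Measure ℝ) :=
      aux_cut_integrable hν _
    have hG1 : Integrable (fun z : ℝ × ℝ => if (m:ℝ)/2 < |z.1| then 2*|z.1| else 0)
        (π : Measure (ℝ × ℝ)) := aux_integrable_comp_fst hπ1 (aux_cut_measurable _) hg1
    have hG2 : Integrable (fun z : ℝ × ℝ => if (m:ℝ)/2 < |z.2| then 2*|z.2| else 0)
        (π : Measure (ℝ × ℝ)) := aux_integrable_comp_snd hπ2 (aux_cut_measurable _) hg2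
    -- the pointwise inequalities
    have hptwise : ∀ z : ℝ × ℝ, (min |z.2 - z.1| (m:ℝ)) ^ p ≤ |z.2 - z.1| ^ p := by
      intro z
      exact Real.rpow_le_rpow (le_min (abs_nonneg _) (by linarith)) (min_le_left _ _) hp.1.le
    have hkey : (∫ z : ℝ × ℝ, |z.2 - z.1| ^ p ∂(π : Measure (ℝ × ℝ))) -
        (∫ z : ℝ × ℝ, (min |z.2 - z.1| (m:ℝ)) ^ p ∂(π : Measure (ℝ × ℝ))) ≤
        (∫ x, (if (m:ℝ)/2 < |x| then 2*|x| else 0) ∂(μ : Measure ℝ)) +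
        (∫ x, (if (m:ℝ)/2 < |x| then 2*|x| else 0) ∂(ν : Measure ℝ)) := by
      rw [← integral_sub hint1 hint2]
      have hle : (∫ z : ℝ × ℝ, (|z.2 - z.1| ^ p - (min |z.2 - z.1| (m:ℝ)) ^ p)
            ∂(π : Measure (ℝ × ℝ))) ≤
          ∫ z : ℝ × ℝ, ((if (m:ℝ)/2 < |z.1| then 2*|z.1| else 0) +
            (if (m:ℝ)/2 < |z.2| then 2*|z.2| else 0)) ∂(π : Measure (ℝ × ℝ)) := by
        apply integral_mono (hint1.sub hint2) (hG1.add hG2)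
        intro z
        exact aux_pt p (m:ℝ) |z.1| |z.2| |z.2 - z.1| hp.1 hp.2 hn1 (abs_nonneg _)
          (by calc |z.2 - z.1| ≤ |z.2| + |z.1| := abs_sub _ _
              _ = |z.1| + |z.2| := by ring)
      refine hle.trans (le_of_eq ?_)
      rw [integral_add hG1 hG2]
      congr 1
      · rw [← hπ1, integral_map measurable_fst.aemeasurable
          (aux_cut_measurable _).aestronglyMeasurable]
      · rw [← hπ2, integral_map measurable_snd.aemeasurable
          (aux_cut_measurable _).aestronglyMeasurable]
    have hnonneg : (0:ℝ) ≤ (∫ z : ℝ × ℝ, |z.2 - z.1| ^ p ∂(π : Measure (ℝ × ℝ))) -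
        (∫ z : ℝ × ℝ, (min |z.2 - z.1| (m:ℝ)) ^ p ∂(π : Measure (ℝ × ℝ))) :=
      sub_nonneg.2 (integral_mono hint2 hint1 hptwise)
    rw [Real.dist_eq, abs_of_nonneg hnonneg]
    exact lt_of_le_of_lt hkey hm
  have hcontFn : ∀ᶠ m : ℕ in atTop, ContinuousOn (Fn m) S := by
    filter_upwards [eventually_ge_atTop 1] with m hm1
    have hn1 : (1:ℝ) ≤ (m:ℝ) := by exact_mod_cast hm1
    rintro ⟨p₀, π₀⟩ ⟨hp₀, hπ₀⟩
    have hp₀pos : 0 < p₀ := hp₀.1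
    -- integrability of the truncated integrand, for any coupling and any exponent in (0,1]
    have hintmin : ∀ (π : ProbabilityMeasure (ℝ × ℝ)) (r : ℝ), 0 ≤ r → r ≤ 1 →
        Integrable (fun z : ℝ × ℝ => (min |z.2 - z.1| (m:ℝ)) ^ r) (π : Measure (ℝ × ℝ)) := by
      intro π r hr hr1
      apply aux_int_bdd (((continuous_snd.sub continuous_fst).abs.min
        continuous_const).rpow_const (fun z => Or.inr hr)) (C := (m:ℝ))
      intro z
      rw [Real.norm_eq_abs,
        abs_of_nonneg (Real.rpow_nonneg (le_min (abs_nonneg _) (by linarith)) _)]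
      calc (min |z.2 - z.1| (m:ℝ)) ^ r ≤ (m:ℝ) ^ r :=
            Real.rpow_le_rpow (le_min (abs_nonneg _) (by linarith)) (min_le_right _ _) hr
        _ ≤ (m:ℝ) ^ (1:ℝ) := Real.rpow_le_rpow_of_exponent_le hn1 hr1
        _ = (m:ℝ) := Real.rpow_one _
    -- the bounded continuous function at exponent `p₀`
    have hbf : ∀ z : ℝ × ℝ, ‖(min |z.2 - z.1| (m:ℝ)) ^ p₀‖ ≤ (m:ℝ) := by
      intro z
      rw [Real.norm_eq_abs,
        abs_of_nonneg (Real.rpow_nonneg (le_min (abs_nonneg _) (by linarith)) _)]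
      calc (min |z.2 - z.1| (m:ℝ)) ^ p₀ ≤ (m:ℝ) ^ p₀ :=
            Real.rpow_le_rpow (le_min (abs_nonneg _) (by linarith)) (min_le_right _ _) hp₀pos.le
        _ ≤ (m:ℝ) ^ (1:ℝ) := Real.rpow_le_rpow_of_exponent_le hn1 hp₀.2
        _ = (m:ℝ) := Real.rpow_one _
    set f₀ : BoundedContinuousFunction (ℝ × ℝ) ℝ :=
      BoundedContinuousFunction.ofNormedAddCommGroup
        (fun z : ℝ × ℝ => (min |z.2 - z.1| (m:ℝ)) ^ p₀)
        (((continuous_snd.sub continuous_fst).abs.min continuous_const).rpow_const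
          (fun z => Or.inr hp₀pos.le)) (m:ℝ) hbf with hf₀def
    have hf₀coe : ∀ z : ℝ × ℝ, f₀ z = (min |z.2 - z.1| (m:ℝ)) ^ p₀ := fun z => rfl
    have hT : Tendsto
        (fun q : ℝ × ProbabilityMeasure (ℝ × ℝ) => ∫ z, f₀ z ∂(q.2 : Measure (ℝ × ℝ)))
        (𝓝[S] (p₀, π₀)) (𝓝 (∫ z, f₀ z ∂(π₀ : Measure (ℝ × ℝ)))) := by
      have hc := (ProbabilityMeasure.continuous_integral_boundedContinuousFunction f₀).comp
        (continuous_snd : Continuous fun q : ℝ × ProbabilityMeasure (ℝ × ℝ) => q.2)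
      exact (hc.tendsto (p₀, π₀)).mono_left nhdsWithin_le_nhds
    refine Metric.tendsto_nhds.mpr fun ε hε => ?_
    -- uniform continuity of rpow on a compact set
    have hK : IsCompact ((Set.Icc (0:ℝ) (m:ℝ)) ×ˢ (Set.Icc (p₀/2) 1)) :=
      isCompact_Icc.prod isCompact_Icc
    have hφ : ContinuousOn (fun w : ℝ × ℝ => w.1 ^ w.2)
        ((Set.Icc (0:ℝ) (m:ℝ)) ×ˢ (Set.Icc (p₀/2) 1)) := by
      rintro ⟨t, r⟩ ⟨ht, hr⟩
      exact (Real.continuousAt_rpow (t, r)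
        (Or.inr (lt_of_lt_of_le (by linarith) hr.1))).continuousWithinAt
    have hUC := hK.uniformContinuousOn_of_continuous hφ
    rw [Metric.uniformContinuousOn_iff] at hUC
    obtain ⟨δ, hδpos, hδ⟩ := hUC (ε/2) (by linarith)
    have hδ'pos : 0 < min δ (p₀/2) := lt_min hδpos (by linarith)
    have htend1 : Tendsto (fun q : ℝ × ProbabilityMeasure (ℝ × ℝ) => q.1)
        (𝓝[S] (p₀, π₀)) (𝓝 p₀) :=
      (((continuous_fst : Continuous fun q : ℝ × ProbabilityMeasure (ℝ × ℝ) => q.1)).tendsto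
        (p₀, π₀)).mono_left nhdsWithin_le_nhds
    have E2 : ∀ᶠ q : ℝ × ProbabilityMeasure (ℝ × ℝ) in 𝓝[S] (p₀, π₀),
        dist q.1 p₀ < min δ (p₀/2) := by
      exact htend1 (Metric.ball_mem_nhds p₀ hδ'pos)
    have E1 := (Metric.tendsto_nhds.mp hT) (ε/2) (by linarith)
    filter_upwards [E1, E2, self_mem_nhdsWithin] with q h1 h2 h3
    obtain ⟨p, π⟩ := q
    obtain ⟨hp, hπ1, hπ2⟩ := h3
    have hdp : |p - p₀| < min δ (p₀/2) := by rwa [Real.dist_eq] at h2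
    have hplow : p₀/2 ≤ p := by
      have := abs_lt.mp (lt_of_lt_of_le hdp (min_le_right _ _))
      linarith [this.1]
    -- pointwise closeness of the two truncated integrands
    have hclose : ∀ z : ℝ × ℝ,
        |(min |z.2 - z.1| (m:ℝ)) ^ p - (min |z.2 - z.1| (m:ℝ)) ^ p₀| < ε/2 := by
      intro z
      have hmem1 : ((min |z.2 - z.1| (m:ℝ)), p) ∈
          (Set.Icc (0:ℝ) (m:ℝ)) ×ˢ (Set.Icc (p₀/2) 1) :=
        ⟨⟨le_min (abs_nonneg _) (by linarith), min_le_right _ _⟩, ⟨hplow, hp.2⟩⟩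
      have hmem2 : ((min |z.2 - z.1| (m:ℝ)), p₀) ∈
          (Set.Icc (0:ℝ) (m:ℝ)) ×ˢ (Set.Icc (p₀/2) 1) :=
        ⟨⟨le_min (abs_nonneg _) (by linarith), min_le_right _ _⟩, ⟨by linarith, hp₀.2⟩⟩
      have hdist : dist ((min |z.2 - z.1| (m:ℝ)), p) ((min |z.2 - z.1| (m:ℝ)), p₀) < δ := by
        rw [Prod.dist_eq]
        simp only [dist_self]
        calc max 0 (dist p p₀) = dist p p₀ := max_eq_right dist_nonneg
          _ < δ := lt_of_lt_of_le (by rwa [Real.dist_eq]) (min_le_left _ _)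
      have := hδ _ hmem1 _ hmem2 hdist
      rwa [Real.dist_eq] at this
    -- first piece : change of exponent, uniformly over couplings
    have hpiece1 : dist (Fn m (p, π))
        (∫ z : ℝ × ℝ, (min |z.2 - z.1| (m:ℝ)) ^ p₀ ∂(π : Measure (ℝ × ℝ))) ≤ ε/2 := by
      rw [Real.dist_eq]
      have hsub := integral_sub (hintmin π p hp.1.le hp.2) (hintmin π p₀ hp₀pos.le hp₀.2)
      simp only [hFn]
      rw [← hsub]
      have hb := norm_integral_le_of_norm_le_const (μ := (π : Measure (ℝ × ℝ)))
        (f := fun z : ℝ × ℝ => (min |z.2 - z.1| (m:ℝ)) ^ p - (min |z.2 - z.1| (m:ℝ)) ^ p₀)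
        (C := ε/2) (Eventually.of_forall fun z => by
          rw [Real.norm_eq_abs]; exact (hclose z).le)
      simpa [Real.norm_eq_abs] using hb
    have hpiece2 : dist (∫ z : ℝ × ℝ, (min |z.2 - z.1| (m:ℝ)) ^ p₀ ∂(π : Measure (ℝ × ℝ)))
        (Fn m (p₀, π₀)) < ε/2 := by
      simp only [hFn]
      simpa [hf₀coe] using h1
    calc dist (Fn m (p, π)) (Fn m (p₀, π₀)) ≤
        dist (Fn m (p, π))
          (∫ z : ℝ × ℝ, (min |z.2 - z.1| (m:ℝ)) ^ p₀ ∂(π : Measure (ℝ × ℝ))) +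
        dist (∫ z : ℝ × ℝ, (min |z.2 - z.1| (m:ℝ)) ^ p₀ ∂(π : Measure (ℝ × ℝ)))
          (Fn m (p₀, π₀)) := dist_triangle _ _ _
      _ < ε/2 + ε/2 := add_lt_add_of_le_of_lt hpiece1 hpiece2
      _ = ε := by ring
  exact hunif.continuousOn hcontFn.frequently
end

section
/- Stability of optimizers under limits: let μ, ν ∈ 𝒫₁(ℝ), let p_n → 1 with p_n ∈ (0,1], let π_n be a minimizer of T_{p_n} over Marg(μ,ν), and suppose π_n → π weakly. Then π is a minimizer of T₁ over Marg(μ,ν). -/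
open MeasureTheory Filter BoundedContinuousFunction

-- helper lemmas test
lemma aux_cost_integrable (μ ν : ProbabilityMeasure ℝ)
    (hμ : Integrable (fun x : ℝ => |x|) (μ : Measure ℝ))
    (hν : Integrable (fun x : ℝ => |x|) (ν : Measure ℝ))
    (θ : Measure (ℝ × ℝ)) [IsProbabilityMeasure θ]
    (h1 : θ.map Prod.fst = (μ : Measure ℝ)) (h2 : θ.map Prod.snd = (ν : Measure ℝ)) :
    Integrable (fun z : ℝ × ℝ => |z.2 - z.1|) θ := by
  have hf1 : Integrable (fun z : ℝ × ℝ => |z.1|) θ := by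
    have := (integrable_map_measure (f := Prod.fst) (g := fun x : ℝ => |x|)
      (by rw [h1]; exact hμ.1) measurable_fst.aemeasurable).mp (by rw [h1]; exact hμ)
    exact this
  have hf2 : Integrable (fun z : ℝ × ℝ => |z.2|) θ := by
    have := (integrable_map_measure (f := Prod.snd) (g := fun x : ℝ => |x|)
      (by rw [h2]; exact hν.1) measurable_snd.aemeasurable).mp (by rw [h2]; exact hν)
    exact this
  refine (hf1.add hf2).mono ((continuous_snd.sub continuous_fst).abs).aestronglyMeasurable
    (ae_of_all _ fun z => ?_)
  simp only [Pi.add_apply, Real.norm_eq_abs, abs_abs]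
  rw [abs_of_nonneg (by positivity : (0:ℝ) ≤ |z.1| + |z.2|)]
  calc |z.2 - z.1| ≤ |z.2| + |z.1| := abs_sub _ _
    _ = |z.1| + |z.2| := add_comm _ _

lemma aux_rpow_le_s15 (t q : ℝ) (ht : 0 ≤ t) (hq0 : 0 < q) (hq1 : q ≤ 1) :
    t ^ q ≤ 1 + t := by
  rcases le_or_gt t 1 with h | h
  · have := Real.rpow_le_one ht h hq0.le
    linarith
  · have := Real.rpow_le_rpow_of_exponent_le h.le hq1
    rw [Real.rpow_one] at this
    linarith

lemma aux_min_le (t M q : ℝ) (ht : 0 ≤ t) (hM : 1 ≤ M) (hq0 : 0 < q) (hq1 : q ≤ 1) :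
    min t M ≤ t ^ q * M ^ (1 - q) := by
  have hM0 : (0:ℝ) < M := lt_of_lt_of_le one_pos hM
  rcases le_or_gt t M with h | h
  · rcases eq_or_lt_of_le ht with h0 | h0
    · simp [← h0, Real.zero_rpow hq0.ne', min_eq_left (h0 ▸ h)]
    · rw [min_eq_left h]
      calc t = t ^ q * t ^ (1 - q) := by
              rw [← Real.rpow_add h0, add_sub_cancel, Real.rpow_one]
        _ ≤ t ^ q * M ^ (1 - q) :=
              mul_le_mul_of_nonneg_left (Real.rpow_le_rpow ht h (by linarith))
                (Real.rpow_nonneg ht q)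
  · rw [min_eq_right h.le]
    calc M = M ^ q * M ^ (1 - q) := by
            rw [← Real.rpow_add hM0, add_sub_cancel, Real.rpow_one]
      _ ≤ t ^ q * M ^ (1 - q) :=
            mul_le_mul_of_nonneg_right (Real.rpow_le_rpow hM0.le h.le hq0.le)
              (Real.rpow_nonneg hM0.le _)

lemma aux_rpow_integrable (θ : Measure (ℝ × ℝ)) [IsProbabilityMeasure θ]
    (hc : Integrable (fun z : ℝ × ℝ => |z.2 - z.1|) θ)
    (q : ℝ) (hq0 : 0 < q) (hq1 : q ≤ 1) :
    Integrable (fun z : ℝ × ℝ => |z.2 - z.1| ^ q) θ := by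
  refine ((integrable_const (1:ℝ)).add hc).mono
    (((continuous_snd.sub continuous_fst).abs.measurable.pow_const q).aestronglyMeasurable)
    (ae_of_all _ fun z => ?_)
  simp only [Pi.add_apply, Real.norm_eq_abs]
  rw [abs_of_nonneg (Real.rpow_nonneg (abs_nonneg _) q),
    abs_of_nonneg (by positivity : (0:ℝ) ≤ 1 + |z.2 - z.1|)]
  exact aux_rpow_le_s15 _ q (abs_nonneg _) hq0 hq1

lemma aux_tendsto_rpow_integral (θ : Measure (ℝ × ℝ)) [IsProbabilityMeasure θ]
    (hc : Integrable (fun z : ℝ × ℝ => |z.2 - z.1|) θ)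
    (p : ℕ → ℝ) (hp : ∀ n, 0 < p n ∧ p n ≤ 1) (hplim : Tendsto p atTop (nhds 1)) :
    Tendsto (fun n => ∫ z : ℝ × ℝ, |z.2 - z.1| ^ (p n) ∂θ) atTop
      (nhds (∫ z : ℝ × ℝ, |z.2 - z.1| ∂θ)) := by
  refine tendsto_integral_of_dominated_convergence (fun z => 1 + |z.2 - z.1|)
    (fun n => ((continuous_snd.sub continuous_fst).abs.measurable.pow_const
      (p n)).aestronglyMeasurable)
    ((integrable_const (1:ℝ)).add hc)
    (fun n => ae_of_all _ fun z => ?_) (ae_of_all _ fun z => ?_)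
  · rw [Real.norm_eq_abs, abs_of_nonneg (Real.rpow_nonneg (abs_nonneg _) _)]
    exact aux_rpow_le_s15 _ _ (abs_nonneg _) (hp n).1 (hp n).2
  · set t := |z.2 - z.1| with ht
    rcases eq_or_lt_of_le (abs_nonneg (z.2 - z.1)) with h0 | h0
    · rw [ht, ← h0]
      refine Tendsto.congr (fun n => ?_) (tendsto_const_nhds (x := (0:ℝ)))
      rw [Real.zero_rpow (hp n).1.ne']
    · have := (tendsto_const_nhds (x := t) (f := atTop)).rpow hplim (Or.inl h0.ne')
      rwa [Real.rpow_one] at this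

/-- Stability of optimizers: if `p_n → 1`, `π_n` minimizes `T_{p_n}` over
`Marg(μ,ν)` and `π_n → π` weakly, then `π` minimizes `T₁` over `Marg(μ,ν)`. -/
theorem stmt_15 (μ ν : ProbabilityMeasure ℝ)
    (hμ : Integrable (fun x : ℝ => |x|) (μ : Measure ℝ))
    (hν : Integrable (fun x : ℝ => |x|) (ν : Measure ℝ))
    (p : ℕ → ℝ) (hp : ∀ n, 0 < p n ∧ p n ≤ 1) (hplim : Tendsto p atTop (nhds 1))
    (πs : ℕ → ProbabilityMeasure (ℝ × ℝ))
    (hmarg : ∀ n, ((πs n : Measure (ℝ × ℝ)).map Prod.fst = (μ : Measure ℝ) ∧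
      (πs n : Measure (ℝ × ℝ)).map Prod.snd = (ν : Measure ℝ)))
    (hopt : ∀ n, ∀ γ : ProbabilityMeasure (ℝ × ℝ),
      (γ : Measure (ℝ × ℝ)).map Prod.fst = (μ : Measure ℝ) →
      (γ : Measure (ℝ × ℝ)).map Prod.snd = (ν : Measure ℝ) →
      ∫ z : ℝ × ℝ, |z.2 - z.1| ^ (p n) ∂(πs n : Measure (ℝ × ℝ)) ≤
      ∫ z : ℝ × ℝ, |z.2 - z.1| ^ (p n) ∂(γ : Measure (ℝ × ℝ)))
    (π : ProbabilityMeasure (ℝ × ℝ)) (hlim : Tendsto πs atTop (nhds π)) :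
    (π : Measure (ℝ × ℝ)).map Prod.fst = (μ : Measure ℝ) ∧
    (π : Measure (ℝ × ℝ)).map Prod.snd = (ν : Measure ℝ) ∧
    ∀ γ : ProbabilityMeasure (ℝ × ℝ),
      (γ : Measure (ℝ × ℝ)).map Prod.fst = (μ : Measure ℝ) →
      (γ : Measure (ℝ × ℝ)).map Prod.snd = (ν : Measure ℝ) →
      ∫ z : ℝ × ℝ, |z.2 - z.1| ∂(π : Measure (ℝ × ℝ)) ≤
      ∫ z : ℝ × ℝ, |z.2 - z.1| ∂(γ : Measure (ℝ × ℝ)) := by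
  -- Marginals of the limit
  have h1 : (π : Measure (ℝ × ℝ)).map Prod.fst = (μ : Measure ℝ) := by
    have ht := ProbabilityMeasure.tendsto_map_of_tendsto_of_continuous πs π hlim
      (continuous_fst : Continuous (Prod.fst : ℝ × ℝ → ℝ))
    have heq : (fun n => (πs n).map
        (continuous_fst : Continuous (Prod.fst : ℝ × ℝ → ℝ)).measurable.aemeasurable)
        = fun _ => μ := by
      funext n
      exact ProbabilityMeasure.toMeasure_injective (by
        rw [ProbabilityMeasure.toMeasure_map]; exact (hmarg n).1)
    rw [heq] at ht
    have hfin := tendsto_nhds_unique ht tendsto_const_nhds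
    rw [← hfin, ProbabilityMeasure.toMeasure_map]
  have h2 : (π : Measure (ℝ × ℝ)).map Prod.snd = (ν : Measure ℝ) := by
    have ht := ProbabilityMeasure.tendsto_map_of_tendsto_of_continuous πs π hlim
      (continuous_snd : Continuous (Prod.snd : ℝ × ℝ → ℝ))
    have heq : (fun n => (πs n).map
        (continuous_snd : Continuous (Prod.snd : ℝ × ℝ → ℝ)).measurable.aemeasurable)
        = fun _ => ν := by
      funext n
      exact ProbabilityMeasure.toMeasure_injective (by
        rw [ProbabilityMeasure.toMeasure_map]; exact (hmarg n).2)
    rw [heq] at ht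
    have hfin := tendsto_nhds_unique ht tendsto_const_nhds
    rw [← hfin, ProbabilityMeasure.toMeasure_map]
  refine ⟨h1, h2, fun γ hγ1 hγ2 => ?_⟩
  have hintπ : Integrable (fun z : ℝ × ℝ => |z.2 - z.1|) (π : Measure (ℝ × ℝ)) :=
    aux_cost_integrable μ ν hμ hν _ h1 h2
  have hintγ : Integrable (fun z : ℝ × ℝ => |z.2 - z.1|) (γ : Measure (ℝ × ℝ)) :=
    aux_cost_integrable μ ν hμ hν _ hγ1 hγ2
  set B := ∫ z : ℝ × ℝ, |z.2 - z.1| ∂(γ : Measure (ℝ × ℝ)) with hB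
  have hbγ : Tendsto (fun n => ∫ z : ℝ × ℝ, |z.2 - z.1| ^ (p n) ∂(γ : Measure (ℝ × ℝ)))
      atTop (nhds B) := aux_tendsto_rpow_integral _ hintγ p hp hplim
  -- Key truncated bound
  have key : ∀ M : ℝ, 1 ≤ M →
      ∫ z : ℝ × ℝ, min |z.2 - z.1| M ∂(π : Measure (ℝ × ℝ)) ≤ B := by
    intro M hM
    have hM0 : (0:ℝ) < M := lt_of_lt_of_le one_pos hM
    set f : (ℝ × ℝ) →ᵇ ℝ := BoundedContinuousFunction.ofNormedAddCommGroup
      (fun z : ℝ × ℝ => min |z.2 - z.1| M)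
      (((continuous_snd.sub continuous_fst).abs).min continuous_const) M
      (fun z => by
        rw [Real.norm_eq_abs, abs_of_nonneg (le_min (abs_nonneg _) hM0.le)]
        exact min_le_right _ _) with hf
    have hfc : ∀ θ : Measure (ℝ × ℝ), ∫ z, f z ∂θ = ∫ z : ℝ × ℝ, min |z.2 - z.1| M ∂θ := by
      intro θ; rfl
    have ha : Tendsto (fun n => ∫ z, f z ∂(πs n : Measure (ℝ × ℝ))) atTop
        (nhds (∫ z, f z ∂(π : Measure (ℝ × ℝ)))) :=
      ProbabilityMeasure.tendsto_iff_forall_integral_tendsto.mp hlim f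
    have hd : Tendsto (fun n => M ^ (1 - p n) *
        ∫ z : ℝ × ℝ, |z.2 - z.1| ^ (p n) ∂(γ : Measure (ℝ × ℝ))) atTop (nhds B) := by
      have hexp : Tendsto (fun n => M ^ (1 - p n)) atTop (nhds 1) := by
        have := (tendsto_const_nhds (x := M) (f := atTop)).rpow
          ((tendsto_const_nhds (x := (1:ℝ))).sub hplim) (Or.inl hM0.ne')
        rwa [sub_self, Real.rpow_zero] at this
      have := hexp.mul hbγ
      rwa [one_mul] at this
    have hle : ∀ n, ∫ z, f z ∂(πs n : Measure (ℝ × ℝ)) ≤ M ^ (1 - p n) *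
        ∫ z : ℝ × ℝ, |z.2 - z.1| ^ (p n) ∂(γ : Measure (ℝ × ℝ)) := by
      intro n
      have hintn : Integrable (fun z : ℝ × ℝ => |z.2 - z.1|) (πs n : Measure (ℝ × ℝ)) :=
        aux_cost_integrable μ ν hμ hν _ (hmarg n).1 (hmarg n).2
      have hrint : Integrable (fun z : ℝ × ℝ => |z.2 - z.1| ^ (p n))
          (πs n : Measure (ℝ × ℝ)) := aux_rpow_integrable _ hintn _ (hp n).1 (hp n).2
      calc ∫ z, f z ∂(πs n : Measure (ℝ × ℝ))
          = ∫ z : ℝ × ℝ, min |z.2 - z.1| M ∂(πs n : Measure (ℝ × ℝ)) := hfc _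
        _ ≤ ∫ z : ℝ × ℝ, |z.2 - z.1| ^ (p n) * M ^ (1 - p n)
              ∂(πs n : Measure (ℝ × ℝ)) := by
            refine integral_mono (f.integrable _) (hrint.mul_const _) fun z => ?_
            exact aux_min_le _ _ _ (abs_nonneg _) hM (hp n).1 (hp n).2
        _ = M ^ (1 - p n) * ∫ z : ℝ × ℝ, |z.2 - z.1| ^ (p n)
              ∂(πs n : Measure (ℝ × ℝ)) := by
            rw [← integral_const_mul]; congr 1; funext z; ring
        _ ≤ M ^ (1 - p n) * ∫ z : ℝ × ℝ, |z.2 - z.1| ^ (p n)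
              ∂(γ : Measure (ℝ × ℝ)) :=
            mul_le_mul_of_nonneg_left (hopt n γ hγ1 hγ2) (Real.rpow_nonneg hM0.le _)
    have := le_of_tendsto_of_tendsto' ha hd hle
    rwa [hfc] at this
  -- Monotone (dominated) limit M → ∞
  have hmono : Tendsto (fun k : ℕ => ∫ z : ℝ × ℝ, min |z.2 - z.1| ((k : ℝ) + 1)
      ∂(π : Measure (ℝ × ℝ))) atTop
      (nhds (∫ z : ℝ × ℝ, |z.2 - z.1| ∂(π : Measure (ℝ × ℝ)))) := by
    refine tendsto_integral_of_dominated_convergence (fun z => |z.2 - z.1|)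
      (fun k => (((continuous_snd.sub continuous_fst).abs).min
        continuous_const).measurable.aestronglyMeasurable)
      hintπ (fun k => ae_of_all _ fun z => ?_) (ae_of_all _ fun z => ?_)
    · rw [Real.norm_eq_abs, abs_of_nonneg (le_min (abs_nonneg _) (by positivity))]
      exact min_le_left _ _
    · refine Tendsto.congr' ?_ (tendsto_const_nhds (x := |z.2 - z.1|))
      filter_upwards [eventually_ge_atTop ⌈|z.2 - z.1|⌉₊] with k hk
      rw [eq_comm, min_eq_left]
      calc |z.2 - z.1| ≤ (⌈|z.2 - z.1|⌉₊ : ℝ) := Nat.le_ceil _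
        _ ≤ (k : ℝ) := Nat.cast_le.mpr hk
        _ ≤ (k : ℝ) + 1 := by linarith
  exact le_of_tendsto hmono (Eventually.of_forall fun k =>
    key ((k : ℝ) + 1) (by have := Nat.cast_nonneg (α := ℝ) k; linarith))
end

section
/- Splitting of total variation for singular differences: let μ ⊥ ν be mutually singular finite Borel measures on ℝ with cumulative distribution functions F_μ, F_ν, and let F_σ = F_μ − F_ν. Then the positive variation of F_σ over ℝ equals μ(ℝ) and the negative variation equals ν(ℝ); in particular the total variation of F_σ over ℝ equals μ(ℝ) + ν(ℝ). -/
open MeasureTheory Set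
open scoped ENNReal

/-- Positive variation over `ℝ` of `F`, as a supremum over finite strictly
increasing partitions of the sums of positive parts of increments. -/
noncomputable def posVar (F : ℝ → ℝ) : ℝ≥0∞ :=
  ⨆ (n : ℕ) (r : Fin (n + 1) → ℝ) (_ : StrictMono r),
    ∑ k : Fin n, ENNReal.ofReal (F (r k.succ) - F (r k.castSucc))

/-- Negative variation over `ℝ`. -/
noncomputable def negVar (F : ℝ → ℝ) : ℝ≥0∞ :=
  ⨆ (n : ℕ) (r : Fin (n + 1) → ℝ) (_ : StrictMono r),
    ∑ k : Fin n, ENNReal.ofReal (F (r k.castSucc) - F (r k.succ))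

lemma ioc_term (μ ν : Measure ℝ) [IsFiniteMeasure μ] [IsFiniteMeasure ν] {a b : ℝ} (hab : a ≤ b) :
    ENNReal.ofReal (((μ (Iic b)).toReal - (ν (Iic b)).toReal) -
      ((μ (Iic a)).toReal - (ν (Iic a)).toReal)) = μ (Ioc a b) - ν (Ioc a b) := by
  have key : ∀ (κ : Measure ℝ), IsFiniteMeasure κ →
      (κ (Iic b)).toReal - (κ (Iic a)).toReal = (κ (Ioc a b)).toReal := by
    intro κ hκ
    have h1 : κ (Iic a) + κ (Ioc a b) = κ (Iic b) := by
      rw [← measure_union (Iic_disjoint_Ioc le_rfl) measurableSet_Ioc, Iic_union_Ioc_eq_Iic hab]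
    have h2 := congrArg ENNReal.toReal h1
    rw [ENNReal.toReal_add (measure_ne_top _ _) (measure_ne_top _ _)] at h2
    linarith
  have e : ((μ (Iic b)).toReal - (ν (Iic b)).toReal) - ((μ (Iic a)).toReal - (ν (Iic a)).toReal)
      = ((μ (Iic b)).toReal - (μ (Iic a)).toReal) - ((ν (Iic b)).toReal - (ν (Iic a)).toReal) := by
    ring
  rw [e, key μ inferInstance, key ν inferInstance,
    ENNReal.ofReal_sub _ ENNReal.toReal_nonneg,
    ENNReal.ofReal_toReal (measure_ne_top _ _), ENNReal.ofReal_toReal (measure_ne_top _ _)]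

lemma pairwise_disj {n : ℕ} {r : Fin (n + 1) → ℝ} (hr : Monotone r) :
    Pairwise (Function.onFun Disjoint fun k : Fin n => Ioc (r k.castSucc) (r k.succ)) := by
  intro k l hkl
  wlog h : k < l generalizing k l
  · exact (this hkl.symm (hkl.lt_or_gt.resolve_left h)).symm
  simp only [Function.onFun]
  refine Set.Ioc_disjoint_Ioc.mpr ?_
  have h1 : r k.succ ≤ r l.castSucc := by
    apply hr
    simp only [Fin.le_def, Fin.val_succ, Fin.coe_castSucc]
    exact h
  exact le_trans (min_le_left _ _) (h1.trans (le_max_right _ _))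

lemma mem_iUnion_Ioc {n : ℕ} (r : Fin (n + 1) → ℝ) {x : ℝ}
    (hx : x ∈ Ioc (r 0) (r (Fin.last n))) :
    ∃ k : Fin n, x ∈ Ioc (r k.castSucc) (r k.succ) := by
  induction n with
  | zero =>
      exact absurd (hx.1.trans_le hx.2) (lt_irrefl _)
  | succ n ih =>
      by_cases h : x ≤ r (Fin.last n).castSucc
      · obtain ⟨k, hk⟩ := ih (fun i => r i.castSucc) ⟨by simpa using hx.1, h⟩
        refine ⟨k.castSucc, hk.1, ?_⟩
        have : (k.succ).castSucc = (k.castSucc).succ := by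
          ext; simp
        rw [← this]
        exact hk.2
      · exact ⟨Fin.last n, lt_of_not_ge h, by simpa [Fin.succ_last] using hx.2⟩
lemma posVar_eq (μ ν : Measure ℝ) [IsFiniteMeasure μ] [IsFiniteMeasure ν] (hsing : μ ⟂ₘ ν) :
    posVar (fun x => (μ (Set.Iic x)).toReal - (ν (Set.Iic x)).toReal) = μ Set.univ := by
  classical
  apply le_antisymm
  · -- upper bound
    refine iSup_le fun n => iSup_le fun r => iSup_le fun hr => ?_
    have e : ∀ k : Fin n, ENNReal.ofReal
        (((μ (Iic (r k.succ))).toReal - (ν (Iic (r k.succ))).toReal) -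
         ((μ (Iic (r k.castSucc))).toReal - (ν (Iic (r k.castSucc))).toReal))
        = μ (Ioc (r k.castSucc) (r k.succ)) - ν (Ioc (r k.castSucc) (r k.succ)) :=
      fun k => ioc_term μ ν (hr.monotone k.castSucc_le_succ)
    calc ∑ k : Fin n, ENNReal.ofReal
          (((μ (Iic (r k.succ))).toReal - (ν (Iic (r k.succ))).toReal) -
           ((μ (Iic (r k.castSucc))).toReal - (ν (Iic (r k.castSucc))).toReal))
        = ∑ k : Fin n, (μ (Ioc (r k.castSucc) (r k.succ)) - ν (Ioc (r k.castSucc) (r k.succ))) :=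
          Finset.sum_congr rfl fun k _ => e k
      _ ≤ ∑ k : Fin n, μ (Ioc (r k.castSucc) (r k.succ)) :=
          Finset.sum_le_sum fun k _ => tsub_le_self
      _ = μ (⋃ k : Fin n, Ioc (r k.castSucc) (r k.succ)) := by
          rw [measure_iUnion (pairwise_disj hr.monotone) fun k => measurableSet_Ioc]
          exact (tsum_fintype _).symm
      _ ≤ μ Set.univ := measure_mono (subset_univ _)
  · -- lower bound
    refine ENNReal.le_of_forall_pos_le_add fun ε hε _ => ?_
    set F : ℝ → ℝ := fun x => (μ (Set.Iic x)).toReal - (ν (Set.Iic x)).toReal with hFdef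
    set ε' : ℝ≥0∞ := (ε : ℝ≥0∞) / 2 with hε'def
    have hε'0 : ε' ≠ 0 := by
      have hne : (ε : ℝ≥0∞) ≠ 0 := by exact_mod_cast hε.ne'
      simp [hε'def, ENNReal.div_eq_zero_iff, hne]
    obtain ⟨s, hsm, hμs, hνs⟩ := hsing
    obtain ⟨K, hKs, hKc, hKlt⟩ := hsm.compl.exists_isCompact_lt_add (measure_ne_top μ _) hε'0
    have hνK : ν K = 0 := measure_mono_null hKs hνs
    obtain ⟨U, hKU, hUo, hUlt⟩ := K.exists_isOpen_lt_add (measure_ne_top ν K) hε'0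
    rw [hνK, zero_add] at hUlt
    obtain ⟨δ, hδ, hthick⟩ := hKc.exists_thickening_subset_open hUo hKU
    obtain ⟨M₀, hKM₀⟩ : ∃ M, K ⊆ Icc (-M) M := by
      obtain ⟨M, hM⟩ := hKc.isBounded.subset_closedBall 0
      exact ⟨M, by simpa [Real.closedBall_eq_Icc] using hM⟩
    set M : ℝ := max M₀ 0 with hMdef
    have hM0 : 0 ≤ M := le_max_right _ _
    have hKM : K ⊆ Icc (-M) M :=
      hKM₀.trans (Icc_subset_Icc (neg_le_neg (le_max_left _ _)) (le_max_left _ _))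
    set n : ℕ := ⌈(2 * M + 1) / δ⌉₊ + 1 with hndef
    have hn0 : (0 : ℝ) < n := by positivity
    set h : ℝ := (2 * M + 1) / n with hhdef
    have h2M1 : (0:ℝ) < 2 * M + 1 := by linarith
    have hh0 : 0 < h := by positivity
    have hhδ : h < δ := by
      rw [hhdef, div_lt_iff₀ hn0]
      have h1 : (2 * M + 1) / δ ≤ (⌈(2 * M + 1) / δ⌉₊ : ℝ) := Nat.le_ceil _
      have h2 : ((⌈(2 * M + 1) / δ⌉₊ : ℝ)) < n := by
        rw [hndef]; push_cast; linarith
      calc 2 * M + 1 = ((2 * M + 1) / δ) * δ := by field_simp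
        _ ≤ (⌈(2 * M + 1) / δ⌉₊ : ℝ) * δ := by nlinarith
        _ < δ * n := by nlinarith
    set r : Fin (n + 1) → ℝ := fun k => (-M - 1) + k * h with hrdef
    have hmono : StrictMono r := by
      intro k l hkl
      have : (k : ℝ) < l := by exact_mod_cast hkl
      simp only [hrdef]
      nlinarith
    have hrstep : ∀ k : Fin n, r k.succ - r k.castSucc = h := by
      intro k
      simp only [hrdef, Fin.val_succ, Fin.coe_castSucc]
      push_cast; ring
    have hr0 : r 0 = -M - 1 := by simp [hrdef]
    have hrlast : r (Fin.last n) = M := by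
      simp only [hrdef, Fin.val_last, hhdef]
      field_simp
      ring
    set S : Finset (Fin n) :=
      Finset.univ.filter (fun k => (Ioc (r k.castSucc) (r k.succ) ∩ K).Nonempty) with hSdef
    -- each good interval is contained in U
    have hIU : ∀ k ∈ S, Ioc (r k.castSucc) (r k.succ) ⊆ U := by
      intro k hk y hy
      obtain ⟨z, hzI, hzK⟩ := (Finset.mem_filter.mp hk).2
      apply hthick
      refine Metric.mem_thickening_iff.mpr ⟨z, hzK, ?_⟩
      rw [Real.dist_eq]
      have h1 := hy.1; have h2 := hy.2; have h3 := hzI.1; have h4 := hzI.2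
      have h5 := hrstep k
      rw [abs_lt]; constructor <;> linarith
    -- the good intervals cover K
    have hKcov : K ⊆ ⋃ k ∈ S, Ioc (r k.castSucc) (r k.succ) := by
      intro x hx
      have hxI : x ∈ Ioc (r 0) (r (Fin.last n)) := by
        rw [hr0, hrlast]
        have := hKM hx
        exact ⟨by linarith [this.1], this.2⟩
      obtain ⟨k, hk⟩ := mem_iUnion_Ioc r hxI
      have hkS : k ∈ S := Finset.mem_filter.mpr ⟨Finset.mem_univ _, ⟨x, hk, hx⟩⟩
      exact Set.mem_biUnion hkS hk
    -- the sum over the partition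
    have hterm : ∀ k : Fin n, ENNReal.ofReal (F (r k.succ) - F (r k.castSucc))
        = μ (Ioc (r k.castSucc) (r k.succ)) - ν (Ioc (r k.castSucc) (r k.succ)) :=
      fun k => ioc_term μ ν (hmono.monotone k.castSucc_le_succ)
    have hsum : μ K - ν U ≤ ∑ k : Fin n, ENNReal.ofReal (F (r k.succ) - F (r k.castSucc)) := by
      have hμK : μ K ≤ ∑ k ∈ S, μ (Ioc (r k.castSucc) (r k.succ)) := by
        rw [← measure_biUnion_finset
          ((pairwise_disj hmono.monotone).set_pairwise (S : Set (Fin n)))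
          (fun k _ => measurableSet_Ioc)]
        exact measure_mono hKcov
      have hνU : ∑ k ∈ S, ν (Ioc (r k.castSucc) (r k.succ)) ≤ ν U := by
        rw [← measure_biUnion_finset
          ((pairwise_disj hmono.monotone).set_pairwise (S : Set (Fin n)))
          (fun k _ => measurableSet_Ioc)]
        exact measure_mono (Set.iUnion₂_subset hIU)
      calc μ K - ν U
          ≤ (∑ k ∈ S, μ (Ioc (r k.castSucc) (r k.succ)))
            - (∑ k ∈ S, ν (Ioc (r k.castSucc) (r k.succ))) := tsub_le_tsub hμK hνU
        _ ≤ ∑ k ∈ S, (μ (Ioc (r k.castSucc) (r k.succ)) - ν (Ioc (r k.castSucc) (r k.succ))) := by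
            rw [tsub_le_iff_right, ← Finset.sum_add_distrib]
            exact Finset.sum_le_sum fun k _ => le_tsub_add
        _ ≤ ∑ k : Fin n, (μ (Ioc (r k.castSucc) (r k.succ)) - ν (Ioc (r k.castSucc) (r k.succ))) :=
            Finset.sum_le_sum_of_subset (Finset.subset_univ S)
        _ = ∑ k : Fin n, ENNReal.ofReal (F (r k.succ) - F (r k.castSucc)) :=
            (Finset.sum_congr rfl fun k _ => (hterm k).symm)
    have hle : μ K - ν U ≤ posVar F := by
      refine le_trans hsum ?_
      refine le_trans ?_ (le_iSup _ n)
      refine le_trans ?_ (le_iSup _ r)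
      exact le_trans le_rfl (le_iSup (fun _ : StrictMono r =>
        ∑ k : Fin n, ENNReal.ofReal (F (r k.succ) - F (r k.castSucc))) hmono)
    have hμuniv : μ Set.univ = μ sᶜ := by
      rw [← measure_add_measure_compl hsm, hμs, zero_add]
    calc μ Set.univ = μ sᶜ := hμuniv
      _ ≤ μ K + ε' := hKlt.le
      _ ≤ ((μ K - ν U) + ν U) + ε' := by gcongr; exact le_tsub_add
      _ ≤ (posVar F + ε') + ε' := add_le_add (add_le_add hle hUlt.le) le_rfl
      _ = posVar F + ε := by rw [add_assoc, hε'def, ENNReal.add_halves]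

/-- For mutually singular finite measures `μ ⊥ ν` on `ℝ` with
`F_σ = F_μ − F_ν`, the positive variation of `F_σ` over `ℝ` is `μ(ℝ)`, the
negative variation is `ν(ℝ)`, and the total variation is `μ(ℝ) + ν(ℝ)`. -/
theorem stmt_18 (μ ν : Measure ℝ) [IsFiniteMeasure μ] [IsFiniteMeasure ν]
    (hsing : μ ⟂ₘ ν)
    (Fσ : ℝ → ℝ)
    (hF : Fσ = fun x : ℝ => (μ (Set.Iic x)).toReal - (ν (Set.Iic x)).toReal) :
    posVar Fσ = μ Set.univ ∧ negVar Fσ = ν Set.univ ∧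
    posVar Fσ + negVar Fσ = μ Set.univ + ν Set.univ := by
  have h1 : posVar Fσ = μ Set.univ := by rw [hF]; exact posVar_eq μ ν hsing
  have h2 : negVar Fσ = ν Set.univ := by
    have e : negVar Fσ = posVar (fun x => (ν (Set.Iic x)).toReal - (μ (Set.Iic x)).toReal) := by
      rw [hF]; unfold posVar negVar
      exact iSup_congr fun n => iSup_congr fun r => iSup_congr fun hr =>
        Finset.sum_congr rfl fun k _ => congrArg ENNReal.ofReal (by ring)
    rw [e]; exact posVar_eq ν μ hsing.symm
  exact ⟨h1, h2, by rw [h1, h2]⟩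
end
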